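/- The invariant S_o, defined for nanophrases over an arbitrary alphabet α with involution τ, is invariant under the first homotopy move: if P₁ = (𝒜,(xAAy)) and P₂ = (𝒜∖{A},(xy)), then S_o(P₁) = S_o(P₂). -/

import Mathlib

/-- A phrase over alphabet `α`: a flattened list of entries where `none` is the
component separator `|` and `some (n, a)` is an occurrence of the letter with
name `n` and projection `a ∈ α`. -/
abbrev Phrase (α : Type) := List (Option (ℕ × α))

/-- `P` is a nanophrase: every occurring letter occurs exactly twice, and a
letter name determines its projection. -/
def isNanoP {α : Type} [DecidableEq α] (P : Phrase α) : Prop :=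
  ∀ p ∈ P.reduceOption, P.reduceOption.count p = 2 ∧
    ∀ q ∈ P.reduceOption, q.1 = p.1 → q.2 = p.2

/-- The three `(Q,R,S)`-homotopy moves on phrases. -/
inductive PMove {α : Type} (Q : Set α) (R : Set (α × α)) (S : Set (α × α × α)) :
    Phrase α → Phrase α → Prop
  | m1 (x y : Phrase α) (n : ℕ) (a : α) (h : a ∈ Q) :
      PMove Q R S (x ++ [some (n, a), some (n, a)] ++ y) (x ++ y)
  | m2 (x y z : Phrase α) (n m : ℕ) (a b : α) (h : (a, b) ∈ R) :
      PMove Q R S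
        (x ++ [some (n, a), some (m, b)] ++ y ++ [some (m, b), some (n, a)] ++ z)
        (x ++ y ++ z)
  | m3 (x y z t : Phrase α) (n m p : ℕ) (a b c : α) (h : (a, b, c) ∈ S) :
      PMove Q R S
        (x ++ [some (n, a), some (m, b)] ++ y ++ [some (n, a), some (p, c)] ++ z ++
          [some (m, b), some (p, c)] ++ t)
        (x ++ [some (m, b), some (n, a)] ++ y ++ [some (p, c), some (n, a)] ++ z ++
          [some (p, c), some (m, b)] ++ t)

/-- Isomorphism of phrases: an injective renaming of letter names preserving
projections and the phrase structure. -/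
def PIso {α : Type} (P₁ P₂ : Phrase α) : Prop :=
  ∃ f : Equiv.Perm ℕ, P₂ = P₁.map (Option.map fun q => (f q.1, q.2))

/-- One step of `(Q,R,S)`-homotopy: an isomorphism, a move, or an inverse move. -/
def PStep {α : Type} (Q : Set α) (R : Set (α × α)) (S : Set (α × α × α))
    (P₁ P₂ : Phrase α) : Prop :=
  PIso P₁ P₂ ∨ PMove Q R S P₁ P₂ ∨ PMove Q R S P₂ P₁

/-- `(Q,R,S)`-homotopy of phrases. -/
def PHomotopic {α : Type} (Q : Set α) (R : Set (α × α)) (S : Set (α × α × α)) :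
    Phrase α → Phrase α → Prop :=
  Relation.ReflTransGen (PStep Q R S)

/-- The number of components (length) of a phrase. -/
def compCount {α : Type} (P : Phrase α) : ℕ := (P.filter fun o => o.isNone).length + 1

/-- The data of a complete representative system for the orbits of the
involution `τ`: orbits are indexed by `1,…,l+m`, the first `l` being free
(size 2) and the last `m` fixed points; `rep q` is the chosen representative of
the `q`-th orbit and `orb a` is the index of the orbit of `a`. -/
def IsCRS {α : Type} (τ : α → α) (l m : ℕ) (rep : ℕ → α) (orb : α → ℕ) : Prop :=
  Function.Involutive τ ∧
  (∀ a : α, 1 ≤ orb a ∧ orb a ≤ l + m) ∧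
  (∀ a : α, a = rep (orb a) ∨ a = τ (rep (orb a))) ∧
  (∀ q : ℕ, 1 ≤ q → q ≤ l + m → orb (rep q) = q) ∧
  (∀ q : ℕ, 1 ≤ q → q ≤ l + m → (q ≤ l ↔ τ (rep q) ≠ rep q)) ∧
  (∀ a : α, orb (τ a) = orb a)

/-- The subgroup of `∏_{(p,q)} ℤ` by which one quotients to obtain the mixed
group `∏ K_{(p,q)}` with `K_{(p,q)} = ℤ` if `p,q ≤ l` and `ℤ/2ℤ` otherwise. -/
def Ksub (l : ℕ) : AddSubgroup ((ℕ × ℕ) → ℤ) where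
  carrier := {f | ∀ pq : ℕ × ℕ,
    (pq.1 ≤ l ∧ pq.2 ≤ l → f pq = 0) ∧ (¬(pq.1 ≤ l ∧ pq.2 ≤ l) → (2 : ℤ) ∣ f pq)}
  zero_mem' := fun pq => ⟨fun _ => rfl, fun _ => dvd_zero 2⟩
  add_mem' := by
    intro f g hf hg pq
    refine ⟨fun h => ?_, fun h => ?_⟩
    · show f pq + g pq = 0
      rw [(hf pq).1 h, (hg pq).1 h, add_zero]
    · exact dvd_add ((hf pq).2 h) ((hg pq).2 h)
  neg_mem' := by
    intro f hf pq
    refine ⟨fun h => ?_, fun h => ?_⟩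
    · show -f pq = 0
      rw [(hf pq).1 h, neg_zero]
    · exact dvd_neg.mpr ((hf pq).2 h)

/-- The group `∏ K_{(p,q)}`, `K_{(p,q)} = ℤ` if `p,q ≤ l`, else `ℤ/2ℤ`. -/
def KG (l : ℕ) := ((ℕ × ℕ) → ℤ) ⧸ Ksub l

instance (l : ℕ) : AddCommGroup (KG l) := QuotientAddGroup.Quotient.addCommGroup _

/-- The canonical projection onto `∏ K_{(p,q)}`. -/
def kmk (l : ℕ) : ((ℕ × ℕ) → ℤ) → KG l := QuotientAddGroup.mk

/-- The basis vector `e_{(p,q)}`. -/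
def ehat (p q : ℕ) : (ℕ × ℕ) → ℤ := fun pq => if pq = (p, q) then 1 else 0

/-- The coordinate of `v ∈ ∏ K_{(p,q)}` at `pq` is zero (as an element of `ℤ`
if `pq` is a free-free pair, of `ℤ/2ℤ` otherwise). -/
def ZeroCoord (l : ℕ) (v : KG l) (pq : ℕ × ℕ) : Prop :=
  ∀ f : (ℕ × ℕ) → ℤ, kmk l f = v →
    ((pq.1 ≤ l ∧ pq.2 ≤ l → f pq = 0) ∧ (¬(pq.1 ≤ l ∧ pq.2 ≤ l) → (2 : ℤ) ∣ f pq))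

/-- `v` is of type (i): its coordinates `(r,s)` with `r > l` all vanish. -/
def TypeI (l : ℕ) (v : ℕ → KG l) : Prop :=
  ∀ (j r s : ℕ), l < r → ZeroCoord l (v j) (r, s)

/-- `v` is of type (ii): its coordinates `(r,s)` with `r ≤ l` all vanish. -/
def TypeII (l : ℕ) (v : ℕ → KG l) : Prop :=
  ∀ (j r s : ℕ), r ≤ l → ZeroCoord l (v j) (r, s)

/-- `ε(a) = +1` if `a` is a chosen representative, `−1` otherwise. -/
def eps {α : Type} [DecidableEq α] (rep : ℕ → α) (orb : α → ℕ) (a : α) : ℤ :=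
  if a = rep (orb a) then 1 else -1

/-- Flatten a phrase, recording for each occurrence its letter name, projection,
and the (1-based) index of the component in which it occurs. -/
def flat {α : Type} : Phrase α → ℕ → List (ℕ × α × ℕ)
  | [], _ => []
  | Option.none :: P, i => flat P (i + 1)
  | Option.some q :: P, i => (q.1, q.2, i) :: flat P i

/-- The positions (0-based, in the flattening of `P`) of the occurrences of the
letter named `n`. -/
def posL {α : Type} (P : Phrase α) (n : ℕ) : List ℕ :=
  (((flat P 1).zipIdx.filter fun iq => iq.1.1 = n).map Prod.snd)

/-- Position of the first occurrence of the letter named `n`. -/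
def pos1 {α : Type} (P : Phrase α) (n : ℕ) : ℕ := (posL P n).headI

/-- Position of the second occurrence of the letter named `n`. -/
def pos2 {α : Type} (P : Phrase α) (n : ℕ) : ℕ := (posL P n).getLast!

/-- The projection in `α` of the letter named `n`. -/
def projP {α : Type} [Inhabited α] (P : Phrase α) (n : ℕ) : α :=
  (((flat P 1).filter fun q => q.1 = n).headI).2.1

/-- The component containing the first occurrence of the letter named `n`. -/
def comp1 {α : Type} [Inhabited α] (P : Phrase α) (n : ℕ) : ℕ :=
  ((((flat P 1).filter fun q => q.1 = n).map fun q => q.2.2)).headI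

/-- The component containing the second occurrence of the letter named `n`. -/
def comp2 {α : Type} [Inhabited α] (P : Phrase α) (n : ℕ) : ℕ :=
  ((((flat P 1).filter fun q => q.1 = n).map fun q => q.2.2)).getLast!

/-- Fukunaga's `σ_P^j(A,B)` (a lift to `∏ ℤ`; its class in `∏ K_{(p,q)}` is the
actual value): `± e_{(p,q)}` according to the interlacement pattern of `A,B`,
the component of the relevant occurrence of `B`, and whether `|B|` is a chosen
representative; `0` if `A` and `B` are not interlaced. -/
def sigmaHat {α : Type} [DecidableEq α] [Inhabited α] (rep : ℕ → α) (orb : α → ℕ)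
    (P : Phrase α) (j : ℕ) (nA nB : ℕ) : (ℕ × ℕ) → ℤ :=
  if pos1 P nA < pos1 P nB ∧ pos1 P nB < pos2 P nA ∧ pos2 P nA < pos2 P nB ∧
      comp2 P nB = j then
    eps rep orb (projP P nB) • ehat (orb (projP P nA)) (orb (projP P nB))
  else if pos1 P nB < pos1 P nA ∧ pos1 P nA < pos2 P nB ∧ pos2 P nB < pos2 P nA ∧
      comp1 P nB = j then
    (-eps rep orb (projP P nB)) • ehat (orb (projP P nA)) (orb (projP P nB))
  else 0

/-- The list of letter names occurring in `P`. -/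
def lettersP {α : Type} (P : Phrase α) : List ℕ :=
  ((P.reduceOption.map Prod.fst)).dedup

/-- The list `𝒜_j` of letter names occurring in the `j`-th component of `P`. -/
def compLetters {α : Type} (P : Phrase α) (j : ℕ) : List ℕ :=
  ((((flat P 1).filter fun q => q.2.2 = j).map fun q => q.1)).dedup

/-- A lift of `l_{P,j}(A) = Σ_{X ∈ 𝒜} σ_P^j(A,X)`. -/
def lHat {α : Type} [DecidableEq α] [Inhabited α] (rep : ℕ → α) (orb : α → ℕ)
    (P : Phrase α) (nA : ℕ) (j : ℕ) : (ℕ × ℕ) → ℤ :=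
  ((lettersP P).map fun nX => sigmaHat rep orb P j nA nX).sum

/-- `l_P(A) ∈ (∏ K_{(p,q)})^k`, as a function of the component index `j`. -/
def lP {α : Type} [DecidableEq α] [Inhabited α] (l : ℕ) (rep : ℕ → α) (orb : α → ℕ)
    (P : Phrase α) (nA : ℕ) : ℕ → KG l :=
  fun j => kmk l (lHat rep orb P nA j)

open Classical in
/-- The type (i) (`ℤ`-valued) part of `(B_P)_j`:
`(B_P)_j(v) = Σ_{A ∈ 𝒜_j, l_P(A) = v} ε(A)` if `v` is of type (i), else `0`. -/
noncomputable def B1 {α : Type} [DecidableEq α] [Inhabited α] (l : ℕ)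
    (rep : ℕ → α) (orb : α → ℕ) (P : Phrase α) (j : ℕ) (v : ℕ → KG l) : ℤ :=
  if TypeI l v then
    (((compLetters P j).filter fun nA => lP l rep orb P nA = v).map fun nA =>
      eps rep orb (projP P nA)).sum
  else 0

open Classical in
/-- The type (ii) (`ℤ/2ℤ`-valued) part of `(B_P)_j`:
`(B_P)_j(v) = Σ_{A ∈ 𝒜_j, l_P(A) = v} ε(A) mod 2` if `v` is of type (ii), else `0`. -/
noncomputable def B2 {α : Type} [DecidableEq α] [Inhabited α] (l : ℕ)
    (rep : ℕ → α) (orb : α → ℕ) (P : Phrase α) (j : ℕ) (v : ℕ → KG l) : ZMod 2 :=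
  if TypeII l v then
    ((((compLetters P j).filter fun nA => lP l rep orb P nA = v).map fun nA =>
      eps rep orb (projP P nA)).sum : ZMod 2)
  else 0

/-- Equality of the invariants `S_o` of two nanophrases: the maps `(B_P)_j`
agree (on nonzero vectors, where they are defined). -/
def SoEq {α : Type} [DecidableEq α] [Inhabited α] (l : ℕ) (rep : ℕ → α)
    (orb : α → ℕ) (P₁ P₂ : Phrase α) : Prop :=
  ∀ (j : ℕ) (v : ℕ → KG l), v ≠ 0 →
    B1 l rep orb P₁ j v = B1 l rep orb P₂ j v ∧
    B2 l rep orb P₁ j v = B2 l rep orb P₂ j v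

namespace Stmt14Aux

lemma getLast!_of_getLast? {l : List ℕ} {v : ℕ} (h : l.getLast? = some v) :
    l.getLast! = v := by
  cases l with
  | nil => simp at h
  | cons a as =>
    rw [List.getLast?_eq_getLast (l := a :: as) (by simp)] at h
    simp [List.getLast!]; exact Option.some_injective _ h

def gsh (p u : ℕ) : ℕ := if u < p then u else u + 2

lemma gsh_lt_iff (p u v : ℕ) : gsh p u < gsh p v ↔ u < v := by
  simp only [gsh]; split_ifs <;> omega

lemma gsh_lt (p u : ℕ) (h : u < p) : gsh p u = u := if_pos h
lemma gsh_ge (p u : ℕ) (h : p ≤ u) : gsh p u = u + 2 := if_neg (by omega)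

lemma flat_append {α : Type} (u v : Phrase α) (i : ℕ) :
    flat (u ++ v) i = flat u i ++ flat v (i + (u.filter fun o => o.isNone).length) := by
  induction u generalizing i with
  | nil => simp [flat]
  | cons o u ih =>
    cases o with
    | none => simp [flat, ih]; ring_nf
    | some q => simp [flat, ih]

lemma flat_map_name {α : Type} (P : Phrase α) (i : ℕ) :
    (flat P i).map (fun t => (t.1, t.2.1)) = P.reduceOption := by
  induction P generalizing i with
  | nil => simp [flat]
  | cons o P ih =>
    cases o with
    | none => simp [flat, ih]
    | some q => simp [flat, ih]

lemma enumFrom_add {β : Type*} (L : List β) (i k : ℕ) :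
    List.zipIdx L (i + k) = (List.zipIdx L i).map (fun t => (t.1, t.2 + k)) := by
  induction L generalizing i with
  | nil => simp
  | cons b L ih =>
    rw [List.zipIdx_cons, List.zipIdx_cons, List.map_cons]
    have : i + k + 1 = i + 1 + k := by omega
    rw [this, ih (i+1)]

lemma exists_mem_enumFrom {β : Type*} {t : β} {L : List β} (h : t ∈ L) (k : ℕ) :
    ∃ i, (t, i) ∈ List.zipIdx L k := by
  induction L generalizing k with
  | nil => simp at h
  | cons b L ih =>
    rcases List.mem_cons.mp h with rfl | h
    · exact ⟨k, by simp [List.zipIdx_cons]⟩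
    · obtain ⟨i, hi⟩ := ih h (k+1)
      exact ⟨i, by simp [List.zipIdx_cons, hi]⟩

lemma snd_mem_of_mem_enumFrom {β : Type*} {it : β × ℕ} {L : List β} {k : ℕ}
    (h : it ∈ List.zipIdx L k) : it.1 ∈ L := by
  induction L generalizing k with
  | nil => simp at h
  | cons b L ih =>
    rcases List.mem_cons.mp h with rfl | h
    · simp
    · exact List.mem_cons_of_mem _ (ih h)

lemma map_fst_filter_shift {β : Type*} (q : β → Bool) (l : List (β × ℕ)) :
    (((l.map fun t => (t.1, t.2 + 2)).filter fun iq => q iq.1).map Prod.snd) =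
    ((l.filter fun iq => q iq.1).map Prod.snd).map (· + 2) := by
  induction l with
  | nil => rfl
  | cons t l ih => by_cases h : q t.1 <;> simp [h, ih]

end Stmt14Aux

open Stmt14Aux

/-- the invariant `S_o` is invariant under the first homotopy
move: if `P₁ = xAAy` and `P₂ = xy` then `S_o(P₁) = S_o(P₂)`. -/
theorem stmt14 {α : Type} [DecidableEq α] [Inhabited α] (τ : α → α) (l m : ℕ)
    (rep : ℕ → α) (orb : α → ℕ) (hcrs : IsCRS τ l m rep orb)
    (x y : Phrase α) (n : ℕ) (a : α)
    (hnano : isNanoP (x ++ [some (n, a), some (n, a)] ++ y)) :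
    SoEq l rep orb (x ++ [some (n, a), some (n, a)] ++ y) (x ++ y) := by
  classical
  set P₁ : Phrase α := x ++ [some (n, a), some (n, a)] ++ y with hP1def
  set P₂ : Phrase α := x ++ y with hP2def
  set c : ℕ := 1 + (x.filter fun o => o.isNone).length with hcdef
  set F : List (ℕ × α × ℕ) := flat x 1 with hFdef
  set G : List (ℕ × α × ℕ) := flat y c with hGdef
  set p : ℕ := F.length with hpdef
  have hflat1 : flat P₁ 1 = F ++ (n, a, c) :: (n, a, c) :: G := by
    rw [hP1def, List.append_assoc, flat_append]
    simp [flat, hcdef, hFdef, hGdef]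
  have hflat2 : flat P₂ 1 = F ++ G := by
    rw [hP2def, flat_append]
  -- names in F ++ G are not n
  have hro : P₁.reduceOption = x.reduceOption ++ (n, a) :: (n, a) :: y.reduceOption := by
    rw [hP1def, List.append_assoc, List.reduceOption_append]
    simp
  have hmemna : (n, a) ∈ P₁.reduceOption := by rw [hro]; simp
  obtain ⟨hcnt, hproj⟩ := hnano (n, a) hmemna
  have hnotin : (n, a) ∉ x.reduceOption ++ y.reduceOption := by
    intro hmem
    rw [hro, List.count_append] at hcnt
    simp [List.count_cons] at hcnt
    have h1 := List.count_pos_iff.mpr hmem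
    rw [List.count_append] at h1
    omega
  have hnx : ∀ q ∈ x.reduceOption ++ y.reduceOption, q.1 ≠ n := by
    intro q hq hqn
    have hq1 : q ∈ P₁.reduceOption := by
      rw [hro]
      rcases List.mem_append.mp hq with h | h
      · exact List.mem_append.mpr (Or.inl h)
      · exact List.mem_append.mpr (Or.inr (by simp [h]))
    have hq2 : q.2 = a := hproj q hq1 hqn
    have : q = (n, a) := by
      cases q; simp_all
    exact hnotin (this ▸ hq)
  have hnotFG : ∀ t ∈ F ++ G, t.1 ≠ n := by
    intro t ht
    have h2 : (t.1, t.2.1) ∈ x.reduceOption ++ y.reduceOption := by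
      have := flat_map_name P₂ 1
      rw [hflat2] at this
      rw [hP2def, List.reduceOption_append] at this
      rw [← this]
      exact List.mem_map_of_mem ht
    exact hnx _ h2
  have henum1 : (flat P₁ 1).zipIdx = F.zipIdx ++ ((n, a, c), p) :: ((n, a, c), p + 1) ::
      (List.zipIdx G p).map (fun t => (t.1, t.2 + 2)) := by
    rw [hflat1, List.zipIdx_append, zero_add, ← hpdef, List.zipIdx_cons, List.zipIdx_cons]
    rw [show p + 1 + 1 = p + 2 from rfl, enumFrom_add G p 2]
  have henum2 : (flat P₂ 1).zipIdx = F.zipIdx ++ List.zipIdx G p := by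
    rw [hflat2, List.zipIdx_append, zero_add, ← hpdef]
  have hFmem : ∀ iq ∈ F.zipIdx, iq.1 ∈ F ∧ iq.2 < p := by
    intro iq hiq
    obtain ⟨t, i⟩ := iq
    have h1 := snd_mem_of_mem_enumFrom (show (t, i) ∈ List.zipIdx F 0 from hiq)
    have h2 := List.mem_zipIdx (show (t, i) ∈ List.zipIdx F 0 from hiq)
    refine ⟨h1, ?_⟩
    rw [hpdef]
    omega
  have hGmem : ∀ iq ∈ List.zipIdx G p, iq.1 ∈ G ∧ p ≤ iq.2 := by
    intro iq hiq
    obtain ⟨t, i⟩ := iq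
    have h1 := snd_mem_of_mem_enumFrom hiq
    have h2 := List.mem_zipIdx hiq
    exact ⟨h1, h2.1⟩
  have hocc2 : ∀ m ∈ lettersP P₂, ∃ t ∈ F ++ G, t.1 = m := by
    intro m hm
    rw [lettersP, List.mem_dedup, List.mem_map] at hm
    obtain ⟨q, hq, hq1⟩ := hm
    have hmn := flat_map_name P₂ 1
    rw [hflat2] at hmn
    rw [← hmn, List.mem_map] at hq
    obtain ⟨t, ht, rfl⟩ := hq
    exact ⟨t, ht, hq1⟩
  have hkey : ∀ nB, (∃ t ∈ F ++ G, t.1 = nB) →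
      pos1 P₁ nB = gsh p (pos1 P₂ nB) ∧ pos2 P₁ nB = gsh p (pos2 P₂ nB) ∧
      comp1 P₁ nB = comp1 P₂ nB ∧ comp2 P₁ nB = comp2 P₂ nB ∧
      projP P₁ nB = projP P₂ nB := by
    rintro nB ⟨t₀, ht₀, ht₀n⟩
    have hBn : nB ≠ n := ht₀n ▸ hnotFG t₀ ht₀
    have hfilt : (flat P₁ 1).filter (fun q => q.1 = nB) =
        (flat P₂ 1).filter (fun q => q.1 = nB) := by
      rw [hflat1, hflat2, List.filter_append, List.filter_append]
      congr 1
      rw [List.filter_cons_of_neg, List.filter_cons_of_neg] <;>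
        simp [Ne.symm hBn]
    set PF : List ℕ := ((F.zipIdx.filter fun iq => iq.1.1 = nB).map Prod.snd) with hPFdef
    set PG : List ℕ := (((List.zipIdx G p).filter fun iq => iq.1.1 = nB).map Prod.snd)
      with hPGdef
    have hposL2 : posL P₂ nB = PF ++ PG := by
      simp only [posL, henum2, List.filter_append, List.map_append, hPFdef, hPGdef]
    have hposL1 : posL P₁ nB = PF ++ PG.map (· + 2) := by
      simp only [posL, henum1]
      rw [List.filter_append, List.filter_cons_of_neg, List.filter_cons_of_neg,
        List.map_append]
      · congr 1
        exact map_fst_filter_shift (fun b => decide (b.1 = nB)) (List.zipIdx G p)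
      · simp [Ne.symm hBn]
      · simp [Ne.symm hBn]
    have hPFlt : ∀ u ∈ PF, u < p := by
      intro u hu
      rw [hPFdef, List.mem_map] at hu
      obtain ⟨iq, hiq, rfl⟩ := hu
      exact (hFmem iq (List.mem_of_mem_filter hiq)).2
    have hPGge : ∀ u ∈ PG, p ≤ u := by
      intro u hu
      rw [hPGdef, List.mem_map] at hu
      obtain ⟨iq, hiq, rfl⟩ := hu
      exact (hGmem iq (List.mem_of_mem_filter hiq)).2
    have hne : PF ++ PG ≠ [] := by
      obtain ⟨i, hi⟩ := exists_mem_enumFrom ht₀ 0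
      have hmem : i ∈ posL P₂ nB := by
        simp only [posL]
        rw [hflat2]
        exact List.mem_map.mpr ⟨_, List.mem_filter.mpr ⟨hi, by simp [ht₀n]⟩, rfl⟩
      rw [hposL2] at hmem
      exact List.ne_nil_of_mem hmem
    have hpos1 : pos1 P₁ nB = gsh p (pos1 P₂ nB) := by
      simp only [pos1]
      rw [hposL1, hposL2]
      cases hPF : PF with
      | nil =>
        cases hPG : PG with
        | nil => exact absurd (by rw [hPF, hPG]; rfl) hne
        | cons u tl =>
          have hup : p ≤ u := hPGge u (by rw [hPG]; exact List.mem_cons_self)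
          simp [gsh_ge p u hup]
      | cons f tf =>
        have hfp : f < p := hPFlt f (by rw [hPF]; exact List.mem_cons_self)
        simp [gsh_lt p f hfp]
    have hpos2 : pos2 P₁ nB = gsh p (pos2 P₂ nB) := by
      simp only [pos2]
      rw [hposL1, hposL2]
      cases hPG : PG with
      | nil =>
        simp only [List.map_nil, List.append_nil]
        have hPFne : PF ≠ [] := by
          intro h
          exact hne (by rw [h, hPG]; rfl)
        rw [getLast!_of_getLast? (List.getLast?_eq_getLast hPFne)]
        rw [gsh_lt p _ (hPFlt _ (List.getLast_mem hPFne))]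
      | cons u tl =>
        have hne2 : (u :: tl) ≠ [] := by simp
        have e1 : ((u :: tl).map (· + 2)).getLast? = some ((u :: tl).getLast hne2 + 2) := by
          rw [List.getLast?_map, List.getLast?_eq_getLast hne2]
          rfl
        have e2 : (PF ++ (u :: tl).map (· + 2)).getLast? =
            some ((u :: tl).getLast hne2 + 2) := by
          rw [List.getLast?_append, e1]
          rfl
        have e3 : (PF ++ u :: tl).getLast? = some ((u :: tl).getLast hne2) := by
          rw [List.getLast?_append, List.getLast?_eq_getLast hne2]
          rfl
        rw [getLast!_of_getLast? e2, getLast!_of_getLast? e3]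
        exact (gsh_ge p _ (hPGge _ (by rw [hPG]; exact List.getLast_mem hne2))).symm
    refine ⟨hpos1, hpos2, ?_, ?_, ?_⟩
    · simp only [comp1, hfilt]
    · simp only [comp2, hfilt]
    · simp only [projP, hfilt]
  have hFn : F.zipIdx.filter (fun iq => iq.1.1 = n) = [] := by
    rw [List.filter_eq_nil_iff]
    intro iq hiq
    simp only [decide_eq_true_eq]
    exact hnotFG iq.1 (List.mem_append_left _ (hFmem iq hiq).1)
  have hGn : (((List.zipIdx G p).map fun t => (t.1, t.2 + 2)).filter
      fun iq => iq.1.1 = n) = [] := by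
    rw [List.filter_eq_nil_iff]
    intro iq hiq
    rw [List.mem_map] at hiq
    obtain ⟨t, ht, rfl⟩ := hiq
    simp only [decide_eq_true_eq]
    exact hnotFG t.1 (List.mem_append_right _ (hGmem t ht).1)
  have hposn : posL P₁ n = [p, p + 1] := by
    simp [posL, henum1, List.filter_append, hFn, hGn]
  have hpos1n : pos1 P₁ n = p := by simp [pos1, hposn]
  have hpos2n : pos2 P₁ n = p + 1 := by
    simp only [pos2, hposn]
    exact getLast!_of_getLast? rfl
  have hsign1 : ∀ (j' nA : ℕ), sigmaHat rep orb P₁ j' nA n = 0 := by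
    intro j' nA
    have c1 : ¬(pos1 P₁ nA < pos1 P₁ n ∧ pos1 P₁ n < pos2 P₁ nA ∧
        pos2 P₁ nA < pos2 P₁ n ∧ comp2 P₁ n = j') := by
      rw [hpos1n, hpos2n]
      rintro ⟨-, h2, h3, -⟩
      omega
    have c2 : ¬(pos1 P₁ n < pos1 P₁ nA ∧ pos1 P₁ nA < pos2 P₁ n ∧
        pos2 P₁ n < pos2 P₁ nA ∧ comp1 P₁ n = j') := by
      rw [hpos1n, hpos2n]
      rintro ⟨h1, h2, -, -⟩
      omega
    simp only [sigmaHat, if_neg c1, if_neg c2]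
  have hsign2 : ∀ (j' nB : ℕ), sigmaHat rep orb P₁ j' n nB = 0 := by
    intro j' nB
    have c1 : ¬(pos1 P₁ n < pos1 P₁ nB ∧ pos1 P₁ nB < pos2 P₁ n ∧
        pos2 P₁ n < pos2 P₁ nB ∧ comp2 P₁ nB = j') := by
      rw [hpos1n, hpos2n]
      rintro ⟨h1, h2, -, -⟩
      omega
    have c2 : ¬(pos1 P₁ nB < pos1 P₁ n ∧ pos1 P₁ n < pos2 P₁ nB ∧
        pos2 P₁ nB < pos2 P₁ n ∧ comp1 P₁ nB = j') := by
      rw [hpos1n, hpos2n]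
      rintro ⟨-, h2, h3, -⟩
      omega
    simp only [sigmaHat, if_neg c1, if_neg c2]
  have hsig : ∀ (j' : ℕ), ∀ nA ∈ lettersP P₂, ∀ nB ∈ lettersP P₂,
      sigmaHat rep orb P₁ j' nA nB = sigmaHat rep orb P₂ j' nA nB := by
    intro j' nA hA nB hB
    obtain ⟨h1A, h2A, -, -, hprA⟩ := hkey nA (hocc2 nA hA)
    obtain ⟨h1B, h2B, hc1B, hc2B, hprB⟩ := hkey nB (hocc2 nB hB)
    simp only [sigmaHat, h1A, h2A, h1B, h2B, hc1B, hc2B, hprB, hprA, gsh_lt_iff]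
  have hnmem2 : n ∉ P₂.reduceOption.map Prod.fst := by
    intro hmem
    rw [List.mem_map] at hmem
    obtain ⟨q, hq, hq1⟩ := hmem
    exact hnx q (by rwa [hP2def, List.reduceOption_append] at hq) hq1
  have hlet : List.Perm (lettersP P₁) (n :: lettersP P₂) := by
    have h2 : (n :: lettersP P₂).Nodup :=
      List.nodup_cons.mpr ⟨by simpa [lettersP, List.mem_dedup] using hnmem2,
        List.nodup_dedup _⟩
    refine (List.perm_ext_iff_of_nodup (List.nodup_dedup _) h2).mpr ?_
    intro m₀
    simp only [lettersP, List.mem_dedup, List.mem_cons, hro, hP2def,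
      List.reduceOption_append, List.map_append, List.map_cons, List.mem_append,
      List.mem_cons]
    tauto
  have hlHat : ∀ nA ∈ lettersP P₂, ∀ (j' : ℕ),
      lHat rep orb P₁ nA j' = lHat rep orb P₂ nA j' := by
    intro nA hA j'
    simp only [lHat]
    rw [(hlet.map fun nX => sigmaHat rep orb P₁ j' nA nX).sum_eq]
    rw [List.map_cons, List.sum_cons, hsign1 j' nA, zero_add]
    exact congrArg List.sum (List.map_congr_left fun nX hX => hsig j' nA hA nX hX)
  have hlPn : lP l rep orb P₁ n = 0 := by
    funext j'
    simp only [lP, Pi.zero_apply]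
    have hz : lHat rep orb P₁ n j' = 0 := by
      simp only [lHat]
      apply List.sum_eq_zero
      intro f hf
      rw [List.mem_map] at hf
      obtain ⟨nX, -, rfl⟩ := hf
      exact hsign2 j' nX
    rw [hz]
    exact QuotientAddGroup.mk_zero _
  have hlP : ∀ nA ∈ lettersP P₂, lP l rep orb P₁ nA = lP l rep orb P₂ nA := by
    intro nA hA
    funext j'
    simp only [lP]
    rw [hlHat nA hA j']
  have hclsub : ∀ (j' : ℕ), ∀ m ∈ compLetters P₂ j', m ∈ lettersP P₂ := by
    intro j' m hm
    rw [compLetters, List.mem_dedup, List.mem_map] at hm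
    obtain ⟨t, ht, rfl⟩ := hm
    have ht2 := List.mem_of_mem_filter ht
    rw [lettersP, List.mem_dedup, List.mem_map]
    refine ⟨(t.1, t.2.1), ?_, rfl⟩
    have hmn := flat_map_name P₂ 1
    rw [← hmn]
    exact List.mem_map_of_mem ht2
  intro j v hv
  have hstep : ∀ L : List ℕ, (∀ m ∈ L, m ∈ lettersP P₂) →
      L.filter (fun nA => decide (lP l rep orb P₁ nA = v)) =
      L.filter (fun nA => decide (lP l rep orb P₂ nA = v)) := fun L hL =>
    List.filter_congr fun m₀ hm => by rw [hlP m₀ (hL m₀ hm)]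
  have hcperm : List.Perm
      ((compLetters P₁ j).filter (fun nA => decide (lP l rep orb P₁ nA = v)))
      ((compLetters P₂ j).filter (fun nA => decide (lP l rep orb P₂ nA = v))) := by
    by_cases hj : j = c
    · have hnotin2 : n ∉ compLetters P₂ j := by
        intro h
        obtain ⟨t, ht, htn⟩ := hocc2 n (hclsub j n h)
        exact hnotFG t ht htn
      have hp1 : List.Perm (compLetters P₁ j) (n :: compLetters P₂ j) := by
        refine (List.perm_ext_iff_of_nodup (List.nodup_dedup _)
          (List.nodup_cons.mpr ⟨hnotin2, List.nodup_dedup _⟩)).mpr ?_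
        intro m₀
        subst hj
        simp only [compLetters, List.mem_dedup, List.mem_cons, hflat1, hflat2,
          List.filter_append, List.filter_cons, List.map_append, List.mem_append]
        simp
        tauto
      refine (hp1.filter _).trans ?_
      rw [List.filter_cons_of_neg, hstep _ (hclsub j)]
      simp only [decide_eq_true_eq, hlPn]
      exact fun h => hv h.symm
    · have hcj : ¬(decide (((n, a, c) : ℕ × α × ℕ).2.2 = j) = true) := by
        simp only [decide_eq_true_eq]
        exact fun h => hj h.symm
      have heq : compLetters P₁ j = compLetters P₂ j := by
        simp only [compLetters, hflat1, hflat2, List.filter_append]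
        rw [List.filter_cons_of_neg (p := fun q : ℕ × α × ℕ => decide (q.2.2 = j)) hcj,
          List.filter_cons_of_neg (p := fun q : ℕ × α × ℕ => decide (q.2.2 = j)) hcj]
      rw [heq, hstep _ (hclsub j)]
  have hmapeq : (((compLetters P₂ j).filter
        fun nA => decide (lP l rep orb P₂ nA = v)).map
        fun nA => eps rep orb (projP P₁ nA)) =
      (((compLetters P₂ j).filter fun nA => decide (lP l rep orb P₂ nA = v)).map
        fun nA => eps rep orb (projP P₂ nA)) :=
    List.map_congr_left fun m₀ hm => by
      obtain ⟨-, -, -, -, hpr⟩ :=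
        hkey m₀ (hocc2 m₀ (hclsub j m₀ (List.mem_of_mem_filter hm)))
      rw [hpr]
  have hfinal : List.Perm (((compLetters P₁ j).filter
        fun nA => decide (lP l rep orb P₁ nA = v)).map
        fun nA => eps rep orb (projP P₁ nA))
      ((((compLetters P₂ j).filter fun nA => decide (lP l rep orb P₂ nA = v)).map
        fun nA => eps rep orb (projP P₂ nA))) := by
    refine (hcperm.map _).trans ?_
    rw [hmapeq]
  constructor
  · simp only [B1]
    split_ifs with h
    · exact hfinal.sum_eq
    · rfl
  · simp only [B2]
    split_ifs with h
    · exact_mod_cast congrArg (fun z : ℤ => (z : ZMod 2)) hfinal.sum_eq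
    · rfl
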